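/- Let (M,d) be a metric space, c : ℝ≥0 → M a ray with trace C = c(ℝ≥0) and Busemann function B_c. Suppose ĉ : ℝ≥0 → M is a ray such that there exist minimal geodesic segments c_n : [0, L_n] → M (isometric embeddings) with L_n → ∞, c_n(t) → ĉ(t) pointwise for each fixed t, and d(c_n(L_n), C) → 0. Then for all s,t ≥ 0 one has B_c(ĉ(t)) − B_c(ĉ(s)) = s − t. -/

import Mathlib

open NNReal Filter Metric Topology

/-- Lemma 2.8: if `ĉ` is a ray which is a pointwise limit of minimal
geodesic segments `cₙ : [0, Lₙ] → M` with `Lₙ → ∞` whose endpoints approach the trace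
`C` of the ray `c`, then the Busemann function `B_c` decreases with unit speed along `ĉ`:
`B_c(ĉ t) - B_c(ĉ s) = s - t`. -/
theorem coray_busemann {M : Type*} [MetricSpace M] (c : ℝ≥0 → M)
    (hc : ∀ s t : ℝ≥0, dist (c s) (c t) = |(s : ℝ) - (t : ℝ)|)
    (B : M → ℝ)
    (hB : ∀ p : M, Tendsto (fun t : ℝ≥0 => dist p (c t) - (t : ℝ)) atTop (𝓝 (B p)))
    (chat : ℝ≥0 → M)
    (hchat : ∀ s t : ℝ≥0, dist (chat s) (chat t) = |(s : ℝ) - (t : ℝ)|)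
    (L : ℕ → ℝ≥0) (cn : ℕ → ℝ≥0 → M)
    (hLn : Tendsto (fun n => (L n : ℝ)) atTop atTop)
    (hmin : ∀ n, ∀ s t : ℝ≥0, s ≤ L n → t ≤ L n →
      dist (cn n s) (cn n t) = |(s : ℝ) - (t : ℝ)|)
    (hconv : ∀ t : ℝ≥0, Tendsto (fun n => cn n t) atTop (𝓝 (chat t)))
    (hend : Tendsto (fun n => infDist (cn n (L n)) (Set.range c)) atTop (𝓝 0)) :
    ∀ s t : ℝ≥0, B (chat t) - B (chat s) = (s : ℝ) - (t : ℝ) := by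
  -- B is 1-Lipschitz
  have hlip : ∀ p q : M, B p ≤ B q + dist p q := by
    intro p q
    refine le_of_tendsto_of_tendsto' (hB p) ((hB q).add_const (dist p q)) ?_
    intro r
    have := dist_triangle p q (c r)
    linarith
  -- choose points on the ray near the endpoints
  have hcne : (Set.range c).Nonempty := ⟨c 0, Set.mem_range_self 0⟩
  have hchoice : ∀ n : ℕ, ∃ u : ℝ≥0,
      dist (cn n (L n)) (c u) <
        infDist (cn n (L n)) (Set.range c) + (1 / (n + 1) : ℝ) := by
    intro n
    have hpos : (0 : ℝ) < 1 / (n + 1) := by positivity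
    have hlt : infDist (cn n (L n)) (Set.range c) <
        infDist (cn n (L n)) (Set.range c) + (1 / (n + 1) : ℝ) := by linarith
    obtain ⟨y, ⟨u, rfl⟩, hy⟩ := (infDist_lt_iff hcne).1 hlt
    exact ⟨u, hy⟩
  set u : ℕ → ℝ≥0 := fun n => (hchoice n).choose with hu_def
  set e : ℕ → ℝ := fun n => dist (cn n (L n)) (c (u n)) with he_def
  have he_lt : ∀ n, e n < infDist (cn n (L n)) (Set.range c) + (1 / (n + 1) : ℝ) :=
    fun n => (hchoice n).choose_spec
  have he0 : Tendsto e atTop (𝓝 0) := by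
    have hub : Tendsto (fun n : ℕ =>
        infDist (cn n (L n)) (Set.range c) + (1 / (n + 1) : ℝ)) atTop (𝓝 0) := by
      have h1 : Tendsto (fun n : ℕ => (1 / (n + 1) : ℝ)) atTop (𝓝 0) :=
        tendsto_one_div_add_atTop_nhds_zero_nat
      simpa using hend.add h1
    refine squeeze_zero (fun n => dist_nonneg) (fun n => (he_lt n).le) hub
  -- distances from cn n to chat tend to 0
  have hdel : ∀ t : ℝ≥0, Tendsto (fun n => dist (cn n t) (chat t)) atTop (𝓝 0) := by
    intro t
    exact tendsto_iff_dist_tendsto_zero.1 (hconv t)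
  -- u n → ∞
  have hureal : Tendsto (fun n => ((u n : ℝ))) atTop atTop := by
    have hlow : ∀ n, (L n : ℝ) - dist (cn n 0) (chat 0) - dist (chat 0) (c 0) - e n
        ≤ (u n : ℝ) := by
      intro n
      have h1 : dist (c 0) (c (u n)) = (u n : ℝ) := by
        rw [hc 0 (u n)]
        simp [abs_of_nonpos]
      have h2 : dist (cn n 0) (cn n (L n)) = (L n : ℝ) := by
        rw [hmin n 0 (L n) zero_le le_rfl]
        simp [abs_of_nonpos]
      have h3 := dist_triangle4 (cn n 0) (chat 0) (c 0) (c (u n))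
      have h4 := dist_triangle (cn n 0) (c (u n)) (cn n (L n))
      have h5 : dist (c (u n)) (cn n (L n)) = e n := dist_comm (c (u n)) (cn n (L n)) ▸ rfl
      -- cn n 0 to cn n (L n) via c (u n)
      have h6 := dist_triangle (cn n 0) (c (u n)) (cn n (L n))
      have h7 := dist_triangle (cn n 0) (c 0) (c (u n))
      have h8 := dist_triangle (cn n 0) (chat 0) (c 0)
      nlinarith [dist_nonneg (x := cn n 0) (y := chat 0)]
    have hg : Tendsto (fun n => (L n : ℝ) - dist (cn n 0) (chat 0) - dist (chat 0) (c 0)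
        - e n) atTop atTop := by
      have : Tendsto (fun n => dist (cn n 0) (chat 0) + dist (chat 0) (c 0) + e n)
          atTop (𝓝 (0 + dist (chat 0) (c 0) + 0)) :=
        ((hdel 0).add_const _).add he0
      have := hLn.atTop_add this.neg
      refine this.congr fun n => by ring
    exact tendsto_atTop_mono hlow hg
  have hu : Tendsto u atTop atTop := by
    rw [Filter.tendsto_atTop]
    intro b
    filter_upwards [hureal.eventually_ge_atTop (b : ℝ)] with n hn
    exact_mod_cast hn
  -- key inequality : B (chat t) - B (chat 0) ≤ - t
  have key : ∀ t : ℝ≥0, B (chat t) - B (chat 0) ≤ -(t : ℝ) := by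
    intro t
    have ha : Tendsto (fun n => dist (chat t) (c (u n)) - (u n : ℝ)) atTop
        (𝓝 (B (chat t))) := (hB (chat t)).comp hu
    have hb : Tendsto (fun n => dist (chat 0) (c (u n)) - (u n : ℝ)) atTop
        (𝓝 (B (chat 0))) := (hB (chat 0)).comp hu
    have hrhs : Tendsto (fun n => -(t : ℝ) + (dist (cn n 0) (chat 0)
        + dist (cn n t) (chat t) + 2 * e n)) atTop (𝓝 (-(t : ℝ))) := by
      have : Tendsto (fun n => dist (cn n 0) (chat 0) + dist (cn n t) (chat t) + 2 * e n)
          atTop (𝓝 (0 + 0 + 2 * 0)) := ((hdel 0).add (hdel t)).add (he0.const_mul 2)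
      simpa using tendsto_const_nhds.add this
    refine le_of_tendsto_of_tendsto (ha.sub hb) hrhs ?_
    filter_upwards [hLn.eventually_ge_atTop (t : ℝ)] with n hn
    have htL : t ≤ L n := by exact_mod_cast hn
    have h1 : dist (cn n t) (cn n (L n)) = (L n : ℝ) - (t : ℝ) := by
      rw [hmin n t (L n) htL le_rfl, abs_of_nonpos (by linarith)]
      ring
    have h2 : dist (cn n 0) (cn n (L n)) = (L n : ℝ) := by
      rw [hmin n 0 (L n) zero_le le_rfl]
      simp [abs_of_nonpos]
    have h3 := dist_triangle4 (chat t) (cn n t) (cn n (L n)) (c (u n))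
    have h4 := dist_triangle4 (cn n 0) (chat 0) (c (u n)) (cn n (L n))
    have h5 : dist (chat t) (cn n t) = dist (cn n t) (chat t) := dist_comm _ _
    have h6 : dist (c (u n)) (cn n (L n)) = e n := dist_comm _ _
    show dist (chat t) (c (u n)) - (u n : ℝ) - (dist (chat 0) (c (u n)) - (u n : ℝ)) ≤ _
    nlinarith
  -- equality along chat
  have heq : ∀ t : ℝ≥0, B (chat t) = B (chat 0) - (t : ℝ) := by
    intro t
    have h1 := key t
    have h2 := hlip (chat 0) (chat t)
    rw [hchat 0 t] at h2
    simp only [NNReal.coe_zero, zero_sub, abs_neg, abs_of_nonneg t.coe_nonneg] at h2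
    linarith
  intro s t
  rw [heq t, heq s]
  ring
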